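/- Let L ≥ 1 and let Λ ⊆ {0, …, L−1} contain no nontrivial solution to a + b + c = 3d. For j ∈ Λ let I_j = [j/(3L), j/(3L) + 1/(9L)) ⊆ ℝ/ℤ and B = ⋃_{j∈Λ} I_j. Suppose w, x, y, z are real numbers with x + y + z = 3w and w, x, y, z mod 1 all lie in B. Then ‖w − z‖_{ℝ/ℤ} < 1/(9L). -/

import Mathlib

open Finset

/-- Distance from a real number to the nearest integer. -/
noncomputable def distToInt (t : ℝ) : ℝ := |t - round t|

lemma interval_bounds {L : ℕ} (hL : 1 ≤ L) {j : ℕ} {t : ℝ}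
    (h1 : (j : ℝ) / (3 * L) ≤ t) (h2 : t < (j : ℝ) / (3 * L) + 1 / (9 * L)) :
    (j : ℝ) ≤ 3 * L * t ∧ 3 * L * t < j + 1 / 3 := by
  have hL' : (1 : ℝ) ≤ L := by exact_mod_cast hL
  have h3L : (0 : ℝ) < 3 * L := by linarith
  constructor
  · rw [div_le_iff₀ h3L] at h1; linarith
  · have := (mul_lt_mul_iff_right₀ h3L).mpr h2
    have heq : 3 * (L : ℝ) * ((j : ℝ) / (3 * L) + 1 / (9 * L)) = j + 1 / 3 := by
      field_simp; ring
    linarith [heq ▸ this]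

theorem close_mod_one_from_B (L : ℕ) (hL : 1 ≤ L) (Λ : Finset ℕ)
    (hΛ : ∀ j ∈ Λ, j < L)
    (hsol : ∀ a ∈ Λ, ∀ b ∈ Λ, ∀ c ∈ Λ, ∀ d ∈ Λ,
      a + b + c = 3 * d → a = d ∧ b = d ∧ c = d)
    (B : Set ℝ)
    (hB : B = ⋃ j ∈ Λ, Set.Ico ((j : ℝ) / (3 * L)) ((j : ℝ) / (3 * L) + 1 / (9 * L)))
    (w x y z : ℝ) (hsum : x + y + z = 3 * w)
    (hw : Int.fract w ∈ B) (hx : Int.fract x ∈ B)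
    (hy : Int.fract y ∈ B) (hz : Int.fract z ∈ B) :
    distToInt (w - z) < 1 / (9 * L) := by
  subst hB
  simp only [Set.mem_iUnion, Set.mem_Ico] at hw hx hy hz
  obtain ⟨jw, hjwΛ, hw1, hw2⟩ := hw
  obtain ⟨jx, hjxΛ, hx1, hx2⟩ := hx
  obtain ⟨jy, hjyΛ, hy1, hy2⟩ := hy
  obtain ⟨jz, hjzΛ, hz1, hz2⟩ := hz
  have hL' : (1 : ℝ) ≤ L := by exact_mod_cast hL
  -- integer relation from the sum
  set N : ℤ := 3 * ⌊w⌋ - ⌊x⌋ - ⌊y⌋ - ⌊z⌋ with hN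
  have hNsum : Int.fract x + Int.fract y + Int.fract z - 3 * Int.fract w = (N : ℝ) := by
    simp only [Int.fract, hN]
    push_cast
    linarith
  obtain ⟨ex1, ex2⟩ := interval_bounds hL hx1 hx2
  obtain ⟨ey1, ey2⟩ := interval_bounds hL hy1 hy2
  obtain ⟨ez1, ez2⟩ := interval_bounds hL hz1 hz2
  obtain ⟨ew1, ew2⟩ := interval_bounds hL hw1 hw2
  -- 3*L*N close to jx+jy+jz-3*jw
  have key1 : ((jx : ℝ) + jy + jz - 3 * jw) - 1 < 3 * L * N := by nlinarith
  have key2 : (3 : ℝ) * L * N < (jx : ℝ) + jy + jz - 3 * jw + 1 := by nlinarith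
  have hm : (jx : ℤ) + jy + jz - 3 * jw = 3 * L * N := by
    have h1 : ((jx : ℤ) + jy + jz - 3 * jw : ℤ) - 3 * L * N < 1 := by
      have : ((((jx : ℤ) + jy + jz - 3 * jw - 3 * L * N : ℤ)) : ℝ) < 1 := by
        push_cast; linarith
      exact_mod_cast this
    have h2 : (-1 : ℤ) < ((jx : ℤ) + jy + jz - 3 * jw : ℤ) - 3 * L * N := by
      have : (-1 : ℝ) < (((jx : ℤ) + jy + jz - 3 * jw - 3 * L * N : ℤ) : ℝ) := by
        push_cast; linarith
      exact_mod_cast this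
    omega
  -- bounds on j's force N = 0
  have hjx := hΛ jx hjxΛ
  have hjy := hΛ jy hjyΛ
  have hjz := hΛ jz hjzΛ
  have hjw := hΛ jw hjwΛ
  have hNz : N = 0 := by
    have hLz : (0 : ℤ) < 3 * L := by
      have : (1 : ℤ) ≤ L := by exact_mod_cast hL
      linarith
    have hjx' : (jx : ℤ) < L := by exact_mod_cast hjx
    have hjy' : (jy : ℤ) < L := by exact_mod_cast hjy
    have hjz' : (jz : ℤ) < L := by exact_mod_cast hjz
    have hjw' : (jw : ℤ) < L := by exact_mod_cast hjw
    have hub : 3 * (L : ℤ) * N < 3 * L * 1 := by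
      rw [← hm]
      have := Int.ofNat_nonneg jw
      linarith
    have hlb : 3 * (L : ℤ) * (-1) < 3 * L * N := by
      rw [← hm]
      have := Int.ofNat_nonneg jx
      have := Int.ofNat_nonneg jy
      have := Int.ofNat_nonneg jz
      linarith
    have h1 := (mul_lt_mul_iff_right₀ hLz).mp hub
    have h2 := (mul_lt_mul_iff_right₀ hLz).mp hlb
    omega
  have hsum' : jx + jy + jz = 3 * jw := by
    rw [hNz] at hm; simp at hm; omega
  obtain ⟨_, _, hzz⟩ := hsol jx hjxΛ jy hjyΛ jz hjzΛ jw hjwΛ hsum'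
  subst hzz
  -- now fract w and fract z lie in the same interval
  have hclose : |Int.fract w - Int.fract z| < 1 / (9 * L) := by
    rw [abs_lt]; constructor <;> linarith
  -- compute distToInt
  set k : ℤ := ⌊w⌋ - ⌊z⌋ with hk
  have hwk : w - z - (k : ℝ) = Int.fract w - Int.fract z := by
    simp only [Int.fract, hk]; push_cast; ring
  have hsmall : 1 / (9 * (L:ℝ)) ≤ 1 / 9 := by
    apply div_le_div_of_nonneg_left <;> linarith
  have hround : round (w - z) = k := by
    have h0 : round (w - z - (k : ℝ)) = 0 := by
      rw [round_eq_zero_iff]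
      constructor
      · have := abs_lt.mp hclose; rw [hwk]; linarith
      · have := abs_lt.mp hclose; rw [hwk]; linarith
    have : w - z = (w - z - (k : ℝ)) + (k : ℝ) := by ring
    rw [this, round_add_intCast, h0, zero_add]
  rw [distToInt, hround]
  calc |w - z - (k : ℝ)| = |Int.fract w - Int.fract z| := by rw [hwk]
    _ < 1 / (9 * L) := hclose
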